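/- Let p be an odd prime and let D = (α,β)_ℚ be a quaternion algebra with α, β p-adic units. Then D is isomorphic over ℚ to a quaternion algebra (α',β)_ℚ where α' is a p-adic unit that is a square in ℚ_p. -/

import Mathlib

open Quaternion

/-- A quaternionic basis of `ℍ[R,c₁,c₂]` with modified first parameter. -/
def myQBasis {R : Type*} [CommRing R] (c₁ c₂ x y d : R) (h : d = c₁ * (x ^ 2 - c₂ * y ^ 2)) :
    QuaternionAlgebra.Basis ℍ[R, c₁, c₂] d 0 c₂ where
  i := ⟨0, x, 0, y⟩
  j := ⟨0, 0, 1, 0⟩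
  k := ⟨0, c₂ * y, 0, x⟩
  i_mul_i := by subst h; ext <;> simp <;> ring
  j_mul_j := by ext <;> simp
  i_mul_j := by ext <;> simp
  j_mul_i := by ext <;> simp

theorem my_quaternion_iso (α β α' t : ℚ) (m n : ℕ) (ht : t = (m:ℚ)^2 - β*(n:ℚ)^2) (ht0 : t ≠ 0)
    (hα' : α' = α * t) :
    Nonempty (ℍ[ℚ, α, β] ≃ₐ[ℚ] ℍ[ℚ, α', β]) := by
  have hf : α' = α * ((m:ℚ) ^ 2 - β * (n:ℚ) ^ 2) := by rw [hα', ht]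
  have hg : α = α' * (((m:ℚ)/t) ^ 2 - β * (-((n:ℚ)/t)) ^ 2) := by
    rw [hα']
    field_simp
    linear_combination α * ht
  set f := (myQBasis α β (m:ℚ) (n:ℚ) α' hf).liftHom
  set g := (myQBasis α' β ((m:ℚ)/t) (-((n:ℚ)/t)) α hg).liftHom
  have h1 : g.comp f = AlgHom.id ℚ ℍ[ℚ, α', β] := by
    ext <;> simp [f, g, myQBasis, QuaternionAlgebra.Basis.lift, QuaternionAlgebra.Basis.self] <;>
      field_simp <;> (try rw [ht]) <;> ring
  have h2 : f.comp g = AlgHom.id ℚ ℍ[ℚ, α, β] := by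
    ext <;> simp [f, g, myQBasis, QuaternionAlgebra.Basis.lift, QuaternionAlgebra.Basis.self] <;>
      field_simp <;> (try rw [ht]) <;> ring
  exact ⟨AlgEquiv.ofAlgHom g f h1 h2⟩

theorem my_zmod_solve (p : ℕ) [Fact p.Prime] (hp : p ≠ 2) (a b : ZMod p) (hb : b ≠ 0) :
    ∃ x y : ZMod p, x ^ 2 - b * y ^ 2 = a := by
  have hcard : Fintype.card (ZMod p) % 2 = 1 := by
    rw [ZMod.card]; exact (Nat.Prime.mod_two_eq_one_iff_ne_two Fact.out).2 hp
  obtain ⟨x, y, hxy⟩ := FiniteField.exists_root_sum_quadratic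
    (f := Polynomial.X ^ 2 - Polynomial.C a) (g := -(Polynomial.C b * Polynomial.X ^ 2))
    (Polynomial.degree_X_pow_sub_C (by norm_num) a)
    (by rw [Polynomial.degree_neg]; exact Polynomial.degree_C_mul_X_pow 2 hb) hcard
  refine ⟨x, y, ?_⟩
  simp only [Polynomial.eval_sub, Polynomial.eval_pow, Polynomial.eval_X, Polynomial.eval_C,
    Polynomial.eval_neg, Polynomial.eval_mul] at hxy
  linear_combination hxy

theorem my_one_unit_is_sq (p : ℕ) [Fact p.Prime] (hp : p ≠ 2) (u : ℚ_[p]) (hu : ‖u - 1‖ < 1) :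
    ∃ s : ℚ_[p], s ^ 2 = u := by
  have hu1 : ‖u‖ ≤ 1 := by
    calc ‖u‖ = ‖(u - 1) + 1‖ := by ring_nf
    _ ≤ max ‖u - 1‖ ‖(1 : ℚ_[p])‖ := Padic.nonarchimedean _ _
    _ ≤ 1 := by rw [norm_one]; exact max_le hu.le le_rfl
  set U : ℤ_[p] := ⟨u, hu1⟩ with hU
  set F : Polynomial ℤ_[p] := Polynomial.X ^ 2 - Polynomial.C U with hF
  have hder1 : F.derivative.eval 1 = 2 := by
    simp [hF]
    exact one_add_one_eq_two
  have h2 : ‖(2 : ℤ_[p])‖ = 1 := by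
    refine le_antisymm (PadicInt.norm_le_one _) ?_
    by_contra h
    push_neg at h
    have : ((p : ℤ)) ∣ (2 : ℤ) := by
      have := (PadicInt.norm_int_lt_one_iff_dvd 2).1 (by exact_mod_cast h)
      exact_mod_cast this
    have hpd : p ∣ 2 := by exact_mod_cast this
    exact hp ((Nat.prime_dvd_prime_iff_eq Fact.out Nat.prime_two).1 hpd)
  have heval : ‖F.eval 1‖ < ‖F.derivative.eval 1‖ ^ 2 := by
    rw [hder1, h2, one_pow]
    have h1 : F.eval 1 = 1 - U := by simp [hF]
    rw [h1]
    have h2' : ‖(1 - U : ℤ_[p])‖ = ‖u - 1‖ := by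
      rw [PadicInt.norm_def, norm_sub_rev]
      rfl
    rw [h2']; exact hu
  obtain ⟨z, hz, -⟩ := hensels_lemma heval
  refine ⟨(z : ℚ_[p]), ?_⟩
  have hz2 : z ^ 2 = U := by
    simp [hF, sub_eq_zero] at hz
    exact hz
  calc (z : ℚ_[p]) ^ 2 = ((z ^ 2 : ℤ_[p]) : ℚ_[p]) := by push_cast; ring
  _ = u := by rw [hz2]

open Quaternion in
/-- For an odd prime `p` and `p`-adic units `α, β ∈ ℚ`, the quaternion algebra
`(α,β)_ℚ` is isomorphic over `ℚ` to some `(α',β)_ℚ` where `α'` is a `p`-adic unit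
that is a square in `ℚ_p`. -/
theorem quaternion_iso_with_square_alpha (p : ℕ) [Fact p.Prime] (hp : p ≠ 2)
    (α β : ℚ) (hα : ‖(α : ℚ_[p])‖ = 1) (hβ : ‖(β : ℚ_[p])‖ = 1) :
    ∃ α' : ℚ, ‖(α' : ℚ_[p])‖ = 1 ∧ (∃ s : ℚ_[p], s ^ 2 = (α' : ℚ_[p])) ∧
      Nonempty (ℍ[ℚ, α, β] ≃ₐ[ℚ] ℍ[ℚ, α', β]) := by
  set αZ : ℤ_[p] := ⟨(α : ℚ_[p]), hα.le⟩ with hαZ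
  set βZ : ℤ_[p] := ⟨(β : ℚ_[p]), hβ.le⟩ with hβZ
  have hb : PadicInt.toZMod βZ ≠ 0 := by
    intro h
    have hker : βZ ∈ RingHom.ker (PadicInt.toZMod (p := p)) := h
    rw [PadicInt.ker_toZMod, PadicInt.maximalIdeal_eq_span_p, Ideal.mem_span_singleton] at hker
    have hlt := (PadicInt.norm_lt_one_iff_dvd βZ).2 hker
    rw [PadicInt.norm_def] at hlt
    have : ‖(β : ℚ_[p])‖ < 1 := hlt
    rw [hβ] at this
    exact lt_irrefl _ this
  obtain ⟨x, y, hxy⟩ := my_zmod_solve p hp (PadicInt.toZMod αZ) (PadicInt.toZMod βZ) hb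
  set m : ℕ := x.val with hmdef
  set n : ℕ := y.val with hndef
  have hm : ((m : ℕ) : ZMod p) = x := ZMod.natCast_rightInverse x
  have hn : ((n : ℕ) : ZMod p) = y := ZMod.natCast_rightInverse y
  set tZ : ℤ_[p] := (m : ℤ_[p]) ^ 2 - βZ * (n : ℤ_[p]) ^ 2 with htZ
  have htzero : PadicInt.toZMod (tZ - αZ) = 0 := by
    rw [htZ]
    push_cast [map_sub, map_mul, map_pow, map_natCast]
    rw [hm, hn, hxy]
    ring
  have hnormlt : ‖tZ - αZ‖ < 1 := by
    rw [PadicInt.norm_lt_one_iff_dvd, ← Ideal.mem_span_singleton,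
      ← PadicInt.maximalIdeal_eq_span_p, ← PadicInt.ker_toZMod]
    exact htzero
  set t : ℚ := (m : ℚ) ^ 2 - β * (n : ℚ) ^ 2 with ht
  have hcast : ((tZ - αZ : ℤ_[p]) : ℚ_[p]) = ((t : ℚ) : ℚ_[p]) - (α : ℚ_[p]) := by
    push_cast [htZ, ht]
    ring
  have htα : ‖((t : ℚ) : ℚ_[p]) - (α : ℚ_[p])‖ < 1 := by
    rw [← hcast, ← PadicInt.norm_def]
    exact hnormlt
  have hαc0 : (α : ℚ_[p]) ≠ 0 := by
    intro h; rw [h, norm_zero] at hα; norm_num at hα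
  have ht0 : t ≠ 0 := by
    intro h
    rw [h] at htα
    simp only [Rat.cast_zero, zero_sub, norm_neg] at htα
    rw [hα] at htα
    exact lt_irrefl _ htα
  refine ⟨α * t, ?_, ?_, ?_⟩
  · have keyc : ((α * t : ℚ) : ℚ_[p]) =
        (α : ℚ_[p]) * (((t : ℚ) : ℚ_[p]) - (α : ℚ_[p])) + (α : ℚ_[p]) ^ 2 := by
      push_cast; ring
    have hsmall : ‖(α : ℚ_[p]) * (((t : ℚ) : ℚ_[p]) - (α : ℚ_[p]))‖ < 1 := by
      rw [norm_mul, hα, one_mul]; exact htα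
    have hsq1 : ‖(α : ℚ_[p]) ^ 2‖ = 1 := by rw [norm_pow, hα, one_pow]
    rw [keyc, Padic.add_eq_max_of_ne (by rw [hsq1]; exact ne_of_lt hsmall),
      hsq1, max_eq_right hsmall.le]
  · have hdiv : ‖((t : ℚ) : ℚ_[p]) / (α : ℚ_[p]) - 1‖ < 1 := by
      have heq : ((t : ℚ) : ℚ_[p]) / (α : ℚ_[p]) - 1 =
          (((t : ℚ) : ℚ_[p]) - (α : ℚ_[p])) / (α : ℚ_[p]) := by
        field_simp
      rw [heq, norm_div, hα, div_one]
      exact htα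
    obtain ⟨s₀, hs₀⟩ := my_one_unit_is_sq p hp _ hdiv
    refine ⟨(α : ℚ_[p]) * s₀, ?_⟩
    rw [mul_pow, hs₀]
    push_cast
    field_simp
  · exact my_quaternion_iso α β (α * t) t m n ht ht0 rfl
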